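/- Define h1(Z0, W0) = −π (√((10 − 7√2)(2 + √2)) W0 − 8) Z0 / (4 √(2(2 + √2))) and h2(Z0, W0) = π (√2 W0² − 2 W0² − 16 W0 + 3√2 Z0² − 6 Z0²) / (8 √(2(2 + √2))). Then the only real solutions of the system h1 = h2 = 0 are (Z0, W0) = (0, 0) and (Z0, W0) = (0, −8(2 + √2)); moreover, at (0, −8(2 + √2)) the Jacobian determinant ∂(h1, h2)/∂(Z0, W0) is nonzero (i.e., it is a simple zero). -/

import Mathlib

open Real

/-- The system `h1 = h2 = 0` arising in Corollary 2 has exactly two real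
solutions, `(0, 0)` and `(0, -8(2+√2))`, and the latter is a simple zero. -/
theorem simple_zeros_corollary2
    (h : ℝ × ℝ → ℝ × ℝ)
    (hh : ∀ Z0 W0 : ℝ, h (Z0, W0) =
      (-(π * (Real.sqrt ((10 - 7 * Real.sqrt 2) * (2 + Real.sqrt 2)) * W0 - 8) * Z0 /
          (4 * Real.sqrt (2 * (2 + Real.sqrt 2)))),
       π * (Real.sqrt 2 * W0 ^ 2 - 2 * W0 ^ 2 - 16 * W0 +
          3 * Real.sqrt 2 * Z0 ^ 2 - 6 * Z0 ^ 2) /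
          (8 * Real.sqrt (2 * (2 + Real.sqrt 2))))) :
    (∀ Z0 W0 : ℝ, h (Z0, W0) = (0, 0) ↔
      ((Z0, W0) = ((0:ℝ), (0:ℝ)) ∨ (Z0, W0) = ((0:ℝ), -8 * (2 + Real.sqrt 2)))) ∧
    LinearMap.det
      ((fderiv ℝ h ((0:ℝ), -8 * (2 + Real.sqrt 2))) : (ℝ × ℝ) →ₗ[ℝ] ℝ × ℝ) ≠ 0 := by
  set s := Real.sqrt 2 with hs_def
  set A := Real.sqrt ((10 - 7 * s) * (2 + s)) with hA_def
  set D := Real.sqrt (2 * (2 + s)) with hD_def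
  have hs0 : 0 ≤ s := Real.sqrt_nonneg 2
  have hs2 : s * s = 2 := Real.mul_self_sqrt (by norm_num)
  have hslt : s < 2 := by nlinarith
  have hA0 : 0 ≤ A := Real.sqrt_nonneg _
  have hD0 : 0 < D := Real.sqrt_pos.mpr (by nlinarith)
  have hpi : (0:ℝ) < π := Real.pi_pos
  set w : ℝ := -8 * (2 + s) with hw_def
  have hwneg : w < 0 := by rw [hw_def]; nlinarith
  constructor
  · intro Z W
    rw [hh, Prod.mk.injEq]
    simp only [Prod.mk.injEq]
    constructor
    · rintro ⟨e1, e2⟩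
      -- extract numerator equations
      rw [neg_eq_zero, div_eq_zero_iff] at e1
      rcases e1 with e1 | e1
      swap
      · exact absurd e1 (by positivity)
      rw [div_eq_zero_iff] at e2
      rcases e2 with e2 | e2
      swap
      · exact absurd e2 (by positivity)
      rcases mul_eq_zero.mp e2 with e2 | e2
      · exact absurd e2 hpi.ne'
      rcases mul_eq_zero.mp e1 with e1 | e1
      · -- π * (A * W - 8) = 0, so A * W = 8, impossible combined with e2
        rcases mul_eq_zero.mp e1 with e1 | e1
        · exact absurd e1 hpi.ne'
        · exfalso
          have hApos : 0 < A := by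
            rcases eq_or_lt_of_le hA0 with hA | hA
            · rw [← hA] at e1; norm_num at e1
            · exact hA
          have hWpos : 0 < W := by
            by_contra hW
            push_neg at hW
            nlinarith [mul_nonneg hApos.le (neg_nonneg.mpr hW)]
          nlinarith [mul_nonneg (by linarith : (0:ℝ) ≤ 2 - s) (sq_nonneg W),
            mul_nonneg (by linarith : (0:ℝ) ≤ 2 - s) (sq_nonneg Z)]
      · -- Z = 0
        subst e1
        have e2' : W * (s * W - 2 * W - 16) = 0 := by linear_combination e2
        rcases mul_eq_zero.mp e2' with e2' | e2'
        · exact Or.inl ⟨rfl, e2'⟩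
        · refine Or.inr ⟨rfl, ?_⟩
          rw [hw_def]
          linear_combination (-(s + 2) / 2) * e2' + (W / 2) * hs2
    · rintro (⟨rfl, rfl⟩ | ⟨rfl, rfl⟩)
      · norm_num
      · constructor
        · simp
        · have key : s * (-8 * (2 + s)) ^ 2 - 2 * (-8 * (2 + s)) ^ 2 - 16 * (-8 * (2 + s)) +
              3 * s * (0:ℝ) ^ 2 - 6 * (0:ℝ) ^ 2 = 0 := by
            linear_combination (64 * s + 128) * hs2
          rw [key]
          simp
  · -- the Jacobian at (0, w)
    have hfun : h = fun p : ℝ × ℝ => (-(π * (A * p.2 - 8) * p.1) * (4 * D)⁻¹,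
        π * (s * (p.2 * p.2) - 2 * (p.2 * p.2) - 16 * p.2 +
          (3 * s * (p.1 * p.1) - 6 * (p.1 * p.1))) * (8 * D)⁻¹) := by
      funext p
      obtain ⟨Z, W⟩ := p
      rw [hh, Prod.mk.injEq]
      constructor <;> ring
    set a : ℝ := -(π * (A * w - 8)) * (4 * D)⁻¹ with ha_def
    set b : ℝ := π * (2 * s * w - 4 * w - 16) * (8 * D)⁻¹ with hb_def
    have hderiv : HasFDerivAt h
        ((a • ContinuousLinearMap.fst ℝ ℝ ℝ).prod
          (b • ContinuousLinearMap.snd ℝ ℝ ℝ)) ((0:ℝ), w) := by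
      rw [hfun]
      have hf := hasFDerivAt_fst (𝕜 := ℝ) (E := ℝ) (F := ℝ) (p := ((0:ℝ), w))
      have hsn := hasFDerivAt_snd (𝕜 := ℝ) (E := ℝ) (F := ℝ) (p := ((0:ℝ), w))
      have d1 : HasFDerivAt (fun p : ℝ × ℝ => -(π * (A * p.2 - 8) * p.1) * (4 * D)⁻¹)
          (a • ContinuousLinearMap.fst ℝ ℝ ℝ) ((0:ℝ), w) := by
        apply ((((((hsn.const_mul A).sub_const 8).const_mul π).mul hf).neg).mul_const
          (4 * D)⁻¹).congr_fderiv
        refine ContinuousLinearMap.ext fun v => ?_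
        simp [ha_def]
        ring
      have d2 : HasFDerivAt (fun p : ℝ × ℝ =>
          π * (s * (p.2 * p.2) - 2 * (p.2 * p.2) - 16 * p.2 +
            (3 * s * (p.1 * p.1) - 6 * (p.1 * p.1))) * (8 * D)⁻¹)
          (b • ContinuousLinearMap.snd ℝ ℝ ℝ) ((0:ℝ), w) := by
        apply (((((((hsn.mul hsn).const_mul s).sub ((hsn.mul hsn).const_mul 2)).sub
          (hsn.const_mul 16)).add (((hf.mul hf).const_mul (3 * s)).sub
          ((hf.mul hf).const_mul 6))).const_mul π).mul_const (8 * D)⁻¹).congr_fderiv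
        refine ContinuousLinearMap.ext fun v => ?_
        simp [hb_def]
        ring
      exact d1.prodMk d2
    rw [hderiv.fderiv]
    have hdet : LinearMap.det
        (((a • ContinuousLinearMap.fst ℝ ℝ ℝ).prod
          (b • ContinuousLinearMap.snd ℝ ℝ ℝ)) : (ℝ × ℝ) →ₗ[ℝ] ℝ × ℝ) = a * b := by
      rw [← LinearMap.det_toMatrix (Module.Basis.finTwoProd ℝ), Matrix.det_fin_two]
      simp [LinearMap.toMatrix_apply, Module.Basis.finTwoProd]
    rw [hdet]
    have ha : a ≠ 0 := by
      have h8 : A * w - 8 ≠ 0 := by nlinarith [mul_nonpos_of_nonneg_of_nonpos hA0 hwneg.le]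
      exact mul_ne_zero (neg_ne_zero.mpr (mul_ne_zero hpi.ne' h8))
        (inv_ne_zero (by positivity))
    have hb : b ≠ 0 := by
      have h16 : 2 * s * w - 4 * w - 16 = 16 := by
        rw [hw_def]; linear_combination (-16) * hs2
      have hb' : b = π * 16 * (8 * D)⁻¹ := by rw [hb_def, h16]
      rw [hb']
      exact mul_ne_zero (mul_ne_zero hpi.ne' (by norm_num)) (inv_ne_zero (by positivity))
    exact mul_ne_zero ha hb
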